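/- There exists a primitive root g modulo 67 such that the cosets X_i = g^i·H (0 ≤ i < 6, indices mod 6) of the subgroup H of 6th-power residues in 𝔽_67^× form a 3-color Directed Anti-Ramsey algebra, i.e., with m = 3: (1) for all i, X_i + X_i = ⋃_{j ≠ i+3} X_j; (2) for all i, X_i + X_{i+3} = 𝔽_67; (3) for all i, j with i ≠ j and j ≠ i+3, X_i + X_j = 𝔽_67 ∖ {0}. -/

import Mathlib

open Pointwise
set_option maxRecDepth 100000
set_option maxHeartbeats 4000000

/-- The set of nonzero `n`-th power residues in `𝔽_p = ZMod p`. -/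
def Hpow (p n : ℕ) : Set (ZMod p) := {x | ∃ u : (ZMod p)ˣ, (u : ZMod p) ^ n = x}

/-- The coset `X_i = g^i · H` of the subgroup of `n`-th power residues. -/
noncomputable def Xc (p n : ℕ) [Fact p.Prime] (g : ZMod p) (i : ℤ) : Set (ZMod p) :=
  g ^ i • Hpow p n

instance : Fact (Nat.Prime 67) := ⟨by norm_num⟩

namespace Aux11

def F : ZMod 6 → Finset (ZMod 67) :=
  ![{1, 9, 14, 15, 22, 24, 25, 40, 59, 62, 64},
    {2, 13, 18, 28, 30, 44, 48, 50, 51, 57, 61},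
    {4, 21, 26, 29, 33, 35, 36, 47, 55, 56, 60},
    {3, 5, 8, 27, 42, 43, 45, 52, 53, 58, 66},
    {6, 10, 16, 17, 19, 23, 37, 39, 49, 54, 65},
    {7, 11, 12, 20, 31, 32, 34, 38, 41, 46, 63}]

lemma two_ne_zero' : (2 : ZMod 67) ≠ 0 := by decide

lemma hH : Hpow 67 6 = ↑(F 0) := by
  have h1 : ∀ y : ZMod 67, y ≠ 0 → y ^ 6 ∈ F 0 := by decide
  have h2 : ∀ x ∈ F 0, ∃ y : ZMod 67, y ≠ 0 ∧ y ^ 6 = x := by decide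
  ext x
  constructor
  · rintro ⟨u, rfl⟩
    exact h1 _ u.ne_zero
  · intro hx
    obtain ⟨y, hy, hyx⟩ := h2 x hx
    exact ⟨(hy.isUnit).unit, by simpa using hyx⟩

lemma hstep : ∀ c : ZMod 6, F (c + 1) = (F c).image (fun x => (2 : ZMod 67) * x) := by
  decide

lemma smul_coe (s : Finset (ZMod 67)) :
    (2 : ZMod 67) • (↑s : Set (ZMod 67)) = ↑(s.image (fun x => (2 : ZMod 67) * x)) := by
  ext x
  simp [Set.mem_smul_set, smul_eq_mul]

lemma Xc_step (i : ℤ) : Xc 67 6 2 (i + 1) = (2 : ZMod 67) • Xc 67 6 2 i := by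
  unfold Xc
  rw [zpow_add₀ two_ne_zero', zpow_one, mul_comm, mul_smul]

lemma smul_cancel {A B : Set (ZMod 67)} (h : (2 : ZMod 67) • A = (2 : ZMod 67) • B) :
    A = B := by
  have := congrArg (fun S => (2 : ZMod 67)⁻¹ • S) h
  simpa [inv_smul_smul₀ two_ne_zero'] using this

lemma key : ∀ i : ℤ, Xc 67 6 2 i = ↑(F ((i : ZMod 6))) := by
  intro i
  induction i using Int.induction_on with
  | zero =>
    unfold Xc
    rw [zpow_zero, one_smul, hH]
    norm_num
  | succ n ih =>
    rw [Xc_step, ih, smul_coe, ← hstep]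
    push_cast
    ring_nf
  | pred n ih =>
    apply smul_cancel
    rw [← Xc_step]
    have e1 : (-(n : ℤ) - 1 + 1) = -(n : ℤ) := by ring
    have e2 : ((-(n : ℤ) : ℤ) : ZMod 6) = ((-(n : ℤ) - 1 : ℤ) : ZMod 6) + 1 := by
      push_cast; ring
    rw [e1, ih, e2, hstep]
    exact (smul_coe _).symm

end Aux11

/-- The cosets of the index-6 subgroup of `𝔽_67ˣ` form a 3-color Directed
Anti-Ramsey algebra. -/
theorem stmt_11 : ∃ g : ZMod 67, IsPrimitiveRoot g 66 ∧
    (∀ i : ℤ, Xc 67 6 g i + Xc 67 6 g i =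
      ⋃ j ∈ {j : ℤ | (j : ZMod 6) ≠ ((i + 3 : ℤ) : ZMod 6)}, Xc 67 6 g j) ∧
    (∀ i : ℤ, Xc 67 6 g i + Xc 67 6 g (i + 3) = Set.univ) ∧
    (∀ i j : ℤ, (j : ZMod 6) ≠ (i : ZMod 6) → (j : ZMod 6) ≠ ((i + 3 : ℤ) : ZMod 6) →
      Xc 67 6 g i + Xc 67 6 g j = {(0 : ZMod 67)}ᶜ) := by
  refine ⟨2, ?_, ?_, ?_, ?_⟩
  · have ho : orderOf (2 : ZMod 67) = 66 := by
      apply orderOf_eq_of_pow_and_pow_div_prime (by norm_num) (by decide)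
      intro p hp hdvd
      have hle : p ≤ 66 := Nat.le_of_dvd (by norm_num) hdvd
      interval_cases p <;> first
        | (exfalso; revert hp; decide)
        | (exfalso; revert hdvd; decide)
        | decide
    exact ho ▸ IsPrimitiveRoot.orderOf (2 : ZMod 67)
  · intro i
    have main1 : ∀ c : ZMod 6, ∀ x : ZMod 67,
        x ∈ Aux11.F c + Aux11.F c ↔ ∃ k : ZMod 6, k ≠ c + 3 ∧ x ∈ Aux11.F k := by decide
    ext x
    rw [Aux11.key i, ← Finset.coe_add]
    simp only [Set.mem_iUnion, Set.mem_setOf_eq, exists_prop, Finset.mem_coe, Aux11.key]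
    constructor
    · intro hx
      obtain ⟨k, hk, hxk⟩ := (main1 _ x).1 hx
      refine ⟨(k.val : ℤ), ?_, ?_⟩
      · have : ((k.val : ℤ) : ZMod 6) = k := by
          push_cast
          exact ZMod.natCast_rightInverse k
        rw [this]
        intro h
        apply hk
        rw [h]
        push_cast
        ring
      · have : ((k.val : ℤ) : ZMod 6) = k := by
          push_cast
          exact ZMod.natCast_rightInverse k
        rw [this]
        exact hxk
    · rintro ⟨j, hj, hxj⟩
      refine (main1 _ x).2 ⟨(j : ZMod 6), ?_, hxj⟩
      intro h
      apply hj
      rw [h]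
      push_cast
      ring
  · intro i
    have main2 : ∀ c : ZMod 6, Aux11.F c + Aux11.F (c + 3) = Finset.univ := by decide
    rw [Aux11.key i, Aux11.key (i + 3), ← Finset.coe_add]
    have e : ((i + 3 : ℤ) : ZMod 6) = ((i : ZMod 6) + 3) := by push_cast; ring
    rw [e, main2, Finset.coe_univ]
  · intro i j hji hji3
    have main3 : ∀ c : ZMod 6, ∀ x : ZMod 67,
        (x ∈ Aux11.F c + Aux11.F (c + 1) ↔ x ≠ 0) ∧
        (x ∈ Aux11.F c + Aux11.F (c + 2) ↔ x ≠ 0) := by decide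
    have hji3' : ((j : ℤ) : ZMod 6) ≠ ((i : ℤ) : ZMod 6) + 3 := by
      rw [show (((i : ℤ) : ZMod 6) + 3) = ((i + 3 : ℤ) : ZMod 6) by push_cast; ring]
      exact hji3
    have hcase : ∀ c d : ZMod 6, d ≠ c → d ≠ c + 3 →
        d = c + 1 ∨ d = c + 2 ∨ c = d + 1 ∨ c = d + 2 := by decide
    rw [Aux11.key i, Aux11.key j, ← Finset.coe_add]
    ext x
    simp only [Finset.mem_coe, Set.mem_compl_iff, Set.mem_singleton_iff]
    rcases hcase _ _ hji hji3' with h | h | h | h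
    · rw [h]; exact (main3 _ x).1
    · rw [h]; exact (main3 _ x).2
    · rw [h, add_comm]; exact (main3 _ x).1
    · rw [h, add_comm]; exact (main3 _ x).2
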